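/- Let A : V → V' be linear, symmetric, bounded and coercive with constant c > 0, let K ⊆ V be nonempty, closed, convex, and let f ∈ V'. For ε ≥ 0 let E_ε(v) = (1/2)⟨A v, v⟩ + (ε/2)‖v‖²_H - ⟨f, v⟩ and suppose y_ε minimizes E_ε over K, while m minimizes E_0 over K. Then (c/2)‖y_ε - m‖²_V + (ε/2)‖y_ε‖²_H ≤ (ε/2)‖m‖²_H, and consequently ‖y_ε - m‖_V ≤ √(ε/c) · ‖m‖_H. -/

import Mathlib

open NormedSpace

/-- energy comparison for the regularized minimizer: if `y_ε` minimizes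
`E_ε(v) = (1/2)⟨Av,v⟩ + (ε/2)‖v‖_H² - ⟨f,v⟩` over `K` and `m` minimizes `E_0` over `K`,
then `(c/2)‖y_ε - m‖_V² + (ε/2)‖y_ε‖_H² ≤ (ε/2)‖m‖_H²`, hence
`‖y_ε - m‖_V ≤ √(ε/c)·‖m‖_H`. -/
theorem regularized_energy_estimate
    {V H : Type*} [NormedAddCommGroup V] [InnerProductSpace ℝ V] [CompleteSpace V]
    [NormedAddCommGroup H] [InnerProductSpace ℝ H] [CompleteSpace H]
    (i : V →L[ℝ] H)
    (A : V →L[ℝ] StrongDual ℝ V)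
    (hsym : ∀ u v : V, A u v = A v u)
    (c : ℝ) (hc : 0 < c) (hcoer : ∀ u : V, c * ‖u‖ ^ 2 ≤ A u u)
    (K : Set V) (hK : K.Nonempty) (hKclosed : IsClosed K) (hKconvex : Convex ℝ K)
    (f : StrongDual ℝ V)
    (Eε : ℝ → V → ℝ)
    (hEε : ∀ (ε : ℝ) (v : V), Eε ε v = (1 / 2) * A v v + (ε / 2) * ‖i v‖ ^ 2 - f v)
    (ε : ℝ) (hε : 0 ≤ ε)
    (yε : V) (hyε : yε ∈ K) (hymin : ∀ v ∈ K, Eε ε yε ≤ Eε ε v)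
    (m : V) (hm : m ∈ K) (hmmin : ∀ v ∈ K, Eε 0 m ≤ Eε 0 v) :
    (c / 2) * ‖yε - m‖ ^ 2 + (ε / 2) * ‖i yε‖ ^ 2 ≤ (ε / 2) * ‖i m‖ ^ 2 ∧
      ‖yε - m‖ ≤ Real.sqrt (ε / c) * ‖i m‖ := by

  set w := (1/2 : ℝ) • yε + (1/2 : ℝ) • m with hwdef
  have hw : w ∈ K := hKconvex hyε hm (by norm_num) (by norm_num) (by norm_num)
  have hAw : A w w = (1/4) * A yε yε + (1/2) * A yε m + (1/4) * A m m := by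
    simp only [hwdef, map_add, map_smul, ContinuousLinearMap.add_apply,
      ContinuousLinearMap.smul_apply, smul_eq_mul]
    rw [hsym m yε]; ring
  have hAd : A (yε - m) (yε - m) = A yε yε - 2 * A yε m + A m m := by
    simp only [map_sub, ContinuousLinearMap.sub_apply]
    rw [hsym m yε]; ring
  have hiw : i w = (1/2:ℝ) • (i yε + i m) := by
    simp [hwdef, map_add, map_smul, smul_add]
  have hnw : ‖i w‖^2 = (1/2)*‖i yε‖^2 + (1/2)*‖i m‖^2 - (1/4)*‖i yε - i m‖^2 := by
    have h1 := norm_add_sq_real (i yε) (i m)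
    have h2 := norm_sub_sq_real (i yε) (i m)
    rw [hiw, norm_smul]
    simp only [Real.norm_eq_abs]
    rw [abs_of_nonneg (by norm_num : (0:ℝ) ≤ 1/2)]
    nlinarith [h1, h2]
  have hfw : f w = (1/2) * f yε + (1/2) * f m := by
    simp [hwdef, map_add, map_smul, smul_eq_mul]
  have hid : i (yε - m) = i yε - i m := map_sub i yε m
  have h1 := hymin w hw
  have h2 := hmmin w hw
  rw [hEε, hEε] at h1 h2
  rw [hAw, hnw, hfw] at h1 h2
  have hco := hcoer (yε - m)
  rw [hAd] at hco
  have hεd : 0 ≤ ε * ‖i yε - i m‖^2 := mul_nonneg hε (sq_nonneg _)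
  have key : (c / 2) * ‖yε - m‖ ^ 2 + (ε / 2) * ‖i yε‖ ^ 2 ≤ (ε / 2) * ‖i m‖ ^ 2 := by
    linarith [h1, h2, hco, hεd]
  refine ⟨key, ?_⟩
  have hrhs : 0 ≤ Real.sqrt (ε / c) * ‖i m‖ :=
    mul_nonneg (Real.sqrt_nonneg _) (norm_nonneg _)
  have hsq : ‖yε - m‖ ^ 2 ≤ (Real.sqrt (ε / c) * ‖i m‖) ^ 2 := by
    have : (Real.sqrt (ε / c) * ‖i m‖) ^ 2 = (ε / c) * ‖i m‖ ^ 2 := by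
      rw [mul_pow, Real.sq_sqrt (div_nonneg hε hc.le)]
    rw [this]
    rw [div_mul_eq_mul_div, le_div_iff₀ hc]
    linarith [key, mul_nonneg hε (sq_nonneg ‖i yε‖)]
  have := Real.sqrt_le_sqrt hsq
  rwa [Real.sqrt_sq (norm_nonneg _), Real.sqrt_sq hrhs] at this
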